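/- Let n ≤ d, let A be a real n×d matrix with rank(A) = n, let Σ be a d×d real symmetric positive definite matrix, let α* ∈ ℝ^d and W ∈ ℝ^n, and set Y := A α* + W and B := A Σ^{-1/2}. Then the matrix B Bᵀ is invertible, and the set { (α − α*)ᵀ Σ (α − α*) : α ∈ ℝ^d, A α = Y } has least element Wᵀ (B Bᵀ)^{-1} W; that is, every α ∈ ℝ^d with A α = Y satisfies (α − α*)ᵀ Σ (α − α*) ≥ Wᵀ (B Bᵀ)^{-1} W, and equality is attained by the interpolator α = α* + Σ^{-1/2} Bᵀ (B Bᵀ)^{-1} W. -/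

import Mathlib

open Matrix

noncomputable def Matrix.PosSemidef.sqrt {n 𝕜 : Type*} [Fintype n] [DecidableEq n] [RCLike 𝕜] [PartialOrder 𝕜]
    {A : Matrix n n 𝕜} (hA : A.PosSemidef) : Matrix n n 𝕜 :=
  hA.1.eigenvectorUnitary.1 * diagonal ((↑) ∘ (√·) ∘ hA.1.eigenvalues) *
    (star hA.1.eigenvectorUnitary : Matrix n n 𝕜)

lemma Matrix.PosSemidef.sqrt_mul_self {n : Type*} [Fintype n] [DecidableEq n]
    {A : Matrix n n ℝ} (hA : A.PosSemidef) : hA.sqrt * hA.sqrt = A := by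
  unfold Matrix.PosSemidef.sqrt
  conv_rhs => rw [hA.1.spectral_theorem, Unitary.conjStarAlgAut_apply]
  have hU : (star hA.1.eigenvectorUnitary : Matrix n n ℝ) * hA.1.eigenvectorUnitary.1 = 1 :=
    Unitary.coe_star_mul_self _
  rw [show ∀ U D U' : Matrix n n ℝ, U * D * U' * (U * D * U') = U * (D * (U' * U) * D) * U' by
    intro U D U'; simp only [Matrix.mul_assoc], hU, Matrix.mul_one, diagonal_mul_diagonal]
  congr 3
  funext i
  simp [Real.mul_self_sqrt (hA.eigenvalues_nonneg i)]

lemma Matrix.PosSemidef.sqrt_isHermitian {n : Type*} [Fintype n] [DecidableEq n]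
    {A : Matrix n n ℝ} (hA : A.PosSemidef) : hA.sqrt.IsHermitian := by
  unfold Matrix.PosSemidef.sqrt IsHermitian
  simp [conjTranspose_mul, Matrix.mul_assoc, star_eq_conjTranspose, diagonal_conjTranspose]

lemma aux_isUnit_of_rank {n : ℕ} (M : Matrix (Fin n) (Fin n) ℝ) (h : M.rank = n) : IsUnit M := by
  rw [← Matrix.mulVec_surjective_iff_isUnit]
  have : LinearMap.range M.mulVecLin = ⊤ := by
    apply Submodule.eq_top_of_finrank_eq
    rw [← Matrix.rank, h]
    simp
  exact LinearMap.range_eq_top.mp this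

lemma aux_adj {m d : ℕ} (P : Matrix (Fin m) (Fin d) ℝ) (u : Fin m → ℝ) (v : Fin d → ℝ) :
    (Pᵀ.mulVec u) ⬝ᵥ v = u ⬝ᵥ (P.mulVec v) := by
  rw [mulVec_transpose, ← dotProduct_mulVec]

lemma aux_dot_self_nonneg {d : ℕ} (v : Fin d → ℝ) : 0 ≤ v ⬝ᵥ v :=
  Finset.sum_nonneg fun i _ => mul_self_nonneg _

/-- For `n ≤ d`, a rank-`n` matrix `A`, a symmetric positive definite
feature covariance `Sg`, true signal `αstar`, noise `W`, output `Y = A αstar + W`, and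
whitened matrix `B = A Sg^{-1/2}`: the matrix `B Bᵀ` is invertible, every interpolating
solution `α` (with `A α = Y`) has excess test MSE `(α - αstar)ᵀ Sg (α - αstar)` at least
`Wᵀ (B Bᵀ)⁻¹ W`, and this value is attained by the ideal interpolator
`αstar + Sg^{-1/2} Bᵀ (B Bᵀ)⁻¹ W`. -/
theorem interpolation_fundamental_price (n d : ℕ) (hnd : n ≤ d)
    (A : Matrix (Fin n) (Fin d) ℝ) (hrank : A.rank = n)
    (Sg : Matrix (Fin d) (Fin d) ℝ) (hSg : Sg.PosDef)
    (αstar : Fin d → ℝ) (W : Fin n → ℝ) (Y : Fin n → ℝ)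
    (hY : Y = A.mulVec αstar + W)
    (B : Matrix (Fin n) (Fin d) ℝ) (hB : B = A * (hSg.posSemidef.sqrt)⁻¹) :
    IsUnit (B * Bᵀ) ∧
    (∀ α : Fin d → ℝ, A.mulVec α = Y →
      W ⬝ᵥ (B * Bᵀ)⁻¹.mulVec W ≤ (α - αstar) ⬝ᵥ Sg.mulVec (α - αstar)) ∧
    (A.mulVec (αstar + (hSg.posSemidef.sqrt)⁻¹.mulVec (Bᵀ.mulVec ((B * Bᵀ)⁻¹.mulVec W))) = Y ∧
      ((αstar + (hSg.posSemidef.sqrt)⁻¹.mulVec (Bᵀ.mulVec ((B * Bᵀ)⁻¹.mulVec W))) - αstar) ⬝ᵥ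
          Sg.mulVec ((αstar + (hSg.posSemidef.sqrt)⁻¹.mulVec (Bᵀ.mulVec ((B * Bᵀ)⁻¹.mulVec W)))
            - αstar) =
        W ⬝ᵥ (B * Bᵀ)⁻¹.mulVec W) := by
  set S := hSg.posSemidef.sqrt with hSdef
  have hSS : S * S = Sg := hSg.posSemidef.sqrt_mul_self
  have hSH : S.IsHermitian := hSg.posSemidef.sqrt_isHermitian
  have hSt : Sᵀ = S := by simpa using hSH.eq
  have hdetS : IsUnit S.det := by
    have h2 : S.det * S.det = Sg.det := by rw [← det_mul, hSS]
    have : S.det ≠ 0 := by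
      intro h0
      rw [h0, mul_zero] at h2
      exact hSg.det_pos.ne' h2.symm
    exact this.isUnit
  have hSinvS : S⁻¹ * S = 1 := nonsing_inv_mul S hdetS
  have hSSinv : S * S⁻¹ = 1 := mul_nonsing_inv S hdetS
  have hBS : B * S = A := by
    rw [hB, Matrix.mul_assoc, hSinvS, Matrix.mul_one]
  -- invertibility of M = B Bᵀ
  have hrB : B.rank = n := by
    rw [hB]
    rw [rank_mul_eq_left_of_isUnit_det (S⁻¹) A (by simpa [det_nonsing_inv] using hdetS.inv)]
    exact hrank
  have hM : IsUnit (B * Bᵀ) := by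
    apply aux_isUnit_of_rank
    rw [rank_self_mul_transpose, hrB]
  have hMdet : IsUnit (B * Bᵀ).det := (isUnit_iff_isUnit_det _).mp hM
  have hMMinv : (B * Bᵀ) * (B * Bᵀ)⁻¹ = 1 := mul_nonsing_inv _ hMdet
  set c : Fin n → ℝ := (B * Bᵀ)⁻¹.mulVec W with hc
  set β₀ : Fin d → ℝ := Bᵀ.mulVec c with hβ₀
  have hBβ₀ : B.mulVec β₀ = W := by
    rw [hβ₀, hc, mulVec_mulVec, mulVec_mulVec, hMMinv, one_mulVec]
  have hβ₀sq : β₀ ⬝ᵥ β₀ = W ⬝ᵥ (B * Bᵀ)⁻¹.mulVec W := by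
    rw [hβ₀, aux_adj, hBβ₀, ← hc, dotProduct_comm]
  have hquad : ∀ v : Fin d → ℝ, v ⬝ᵥ Sg.mulVec v = (S.mulVec v) ⬝ᵥ (S.mulVec v) := by
    intro v
    conv_lhs => rw [← hSS, ← mulVec_mulVec]
    rw [dotProduct_mulVec, ← mulVec_transpose, hSt]
  refine ⟨hM, ?_, ?_, ?_⟩
  · intro α hα
    set β : Fin d → ℝ := S.mulVec (α - αstar) with hβ
    have hBβ : B.mulVec β = W := by
      rw [hβ, mulVec_mulVec, hBS, mulVec_sub, hα, hY]
      abel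
    have horth : β₀ ⬝ᵥ (β - β₀) = 0 := by
      rw [hβ₀, aux_adj, mulVec_sub, hBβ, hBβ₀, sub_self, dotProduct_zero]
    have hkey : β ⬝ᵥ β = β₀ ⬝ᵥ β₀ + (β - β₀) ⬝ᵥ (β - β₀) := by
      have hβe : β = β₀ + (β - β₀) := by abel
      calc β ⬝ᵥ β = (β₀ + (β - β₀)) ⬝ᵥ (β₀ + (β - β₀)) := by rw [← hβe]
        _ = β₀ ⬝ᵥ β₀ + β₀ ⬝ᵥ (β - β₀) + ((β - β₀) ⬝ᵥ β₀ + (β - β₀) ⬝ᵥ (β - β₀)) := by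
            rw [add_dotProduct, dotProduct_add, dotProduct_add]
        _ = β₀ ⬝ᵥ β₀ + (β - β₀) ⬝ᵥ (β - β₀) := by
            rw [horth, dotProduct_comm (β - β₀) β₀, horth]; ring
    rw [hquad, ← hβ, ← hβ₀sq, hkey]
    have := aux_dot_self_nonneg (β - β₀)
    linarith
  · rw [mulVec_add, mulVec_mulVec, ← hB, hBβ₀, hY]
  · rw [add_sub_cancel_left, hquad, mulVec_mulVec, hSSinv, one_mulVec, hβ₀sq]
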